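/- Open Mapping Theorem for PN-spaces: Let (V, ν) and (W, μ) be Šerstnev PN-spaces under τ_M that are complete in their strong topologies, and let T : V → W be a continuous surjective linear operator. Then T is an open map with respect to the strong topologies. -/

import Mathlib

open Filter Topology Set

noncomputable section

/-- A distance distribution function: nondecreasing, with values in `[0,1]`,
left-continuous, `F 0 = 0` and `sup F = 1`. -/
def IsDDF (F : ℝ → ℝ) : Prop :=
  Monotone F ∧ (∀ t, F t ∈ Set.Icc (0:ℝ) 1) ∧
  (∀ t : ℝ, Tendsto F (nhdsWithin t (Set.Iio t)) (nhds (F t))) ∧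
  F 0 = 0 ∧ (⨆ t, F t) = 1

/-- A proper d.f.: `F t → 1` as `t → ∞`. -/
def IsProper (F : ℝ → ℝ) : Prop := Tendsto F atTop (nhds 1)

/-- The unit step function at `0`. -/
def H0 : ℝ → ℝ := fun t => if 0 < t then 1 else 0

/-- The quantile function `F̂(w) = sup {t | F t < w}`, valued in `EReal`. -/
noncomputable def qhat (F : ℝ → ℝ) (w : ℝ) : EReal :=
  sSup ((fun t : ℝ => (t : EReal)) '' {t | F t < w})

/-- The triangle function `τ_M(F,G)(x) = sup_{s+t=x} min (F s) (G t)`. -/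
noncomputable def tauM (F G : ℝ → ℝ) : ℝ → ℝ :=
  fun x => ⨆ s : ℝ, min (F s) (G (x - s))

/-- A Šerstnev probabilistic normed space under `τ_M`, with all `ν_x` proper. -/
structure SPN (V : Type*) [AddCommGroup V] [Module ℝ V] where
  nu : V → ℝ → ℝ
  ddf : ∀ x, IsDDF (nu x)
  proper : ∀ x, IsProper (nu x)
  nu_eq_iff : ∀ x, nu x = H0 ↔ x = 0
  nu_add : ∀ x y t, tauM (nu x) (nu y) t ≤ nu (x + y) t
  nu_smul : ∀ a : ℝ, a ≠ 0 → ∀ x t, nu (a • x) t = nu x (t / |a|)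

/-- The quantile seminorm `‖x‖_w = sup {t | ν_x t < w}`. -/
noncomputable def pnorm {V : Type*} [AddCommGroup V] [Module ℝ V]
    (S : SPN V) (x : V) (w : ℝ) : ℝ :=
  sSup {t | S.nu x t < w}

/-- The strong topology of a PN-space, generated by the balls of the seminorms `‖·‖_w`. -/
def strongTop {V : Type*} [AddCommGroup V] [Module ℝ V] (S : SPN V) : TopologicalSpace V :=
  TopologicalSpace.generateFrom
    {U | ∃ (x : V) (w r : ℝ), w ∈ Set.Ioo (0:ℝ) 1 ∧ 0 < r ∧
      U = {y | pnorm S (y - x) w < r}}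

/-- A strong Cauchy sequence. -/
def StrongCauchy {V : Type*} [AddCommGroup V] [Module ℝ V] (S : SPN V) (x : ℕ → V) : Prop :=
  ∀ t : ℝ, 0 < t → ∃ N, ∀ m ≥ N, ∀ n ≥ N, 1 - t < S.nu (x n - x m) t

/-- Strong convergence of a sequence to a point. -/
def StrongLim {V : Type*} [AddCommGroup V] [Module ℝ V] (S : SPN V) (x : ℕ → V) (p : V) : Prop :=
  ∀ t : ℝ, 0 < t → ∃ N, ∀ n ≥ N, 1 - t < S.nu (x n - p) t

/-- Strong completeness: every strong Cauchy sequence strongly converges. -/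
def StrongComplete {V : Type*} [AddCommGroup V] [Module ℝ V] (S : SPN V) : Prop :=
  ∀ x : ℕ → V, StrongCauchy S x → ∃ p, StrongLim S x p

section Aux

variable {V : Type*} [AddCommGroup V] [Module ℝ V] (S : SPN V)

lemma SPN.mono (x : V) : Monotone (S.nu x) := (S.ddf x).1

lemma SPN.nonneg (x : V) (t : ℝ) : 0 ≤ S.nu x t := ((S.ddf x).2.1 t).1

lemma SPN.le_one (x : V) (t : ℝ) : S.nu x t ≤ 1 := ((S.ddf x).2.1 t).2

lemma SPN.zero' (x : V) : S.nu x 0 = 0 := (S.ddf x).2.2.2.1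

lemma SPN.nonpos (x : V) {t : ℝ} (ht : t ≤ 0) : S.nu x t = 0 :=
  le_antisymm (by simpa [S.zero'] using S.mono x ht) (S.nonneg x t)

lemma SPN.nu_neg (x : V) (t : ℝ) : S.nu (-x) t = S.nu x t := by
  have h := S.nu_smul (-1) (by norm_num) x t
  simpa using h

lemma SPN.nu_zero (t : ℝ) : S.nu 0 t = H0 t := by
  rw [(S.nu_eq_iff 0).mpr rfl]

-- pnorm lemmas
lemma pnorm_set_nonempty (x : V) {w : ℝ} (hw : 0 < w) : {t | S.nu x t < w}.Nonempty :=
  ⟨0, by simpa [S.zero'] using hw⟩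

lemma pnorm_bddAbove (x : V) {w : ℝ} (hw : w < 1) : BddAbove {t | S.nu x t < w} := by
  have h : ∀ᶠ s in atTop, w < S.nu x s := (S.proper x).eventually (eventually_gt_nhds hw)
  obtain ⟨N, hN⟩ := eventually_atTop.mp h
  refine ⟨N, fun t ht => ?_⟩
  by_contra hc
  push_neg at hc
  exact absurd (hN t hc.le) (not_lt.2 ht.le)

lemma pnorm_le (x : V) {w r : ℝ} (hw0 : 0 < w) (h : w ≤ S.nu x r) : pnorm S x w ≤ r := by
  refine csSup_le (pnorm_set_nonempty S x hw0) fun t ht => ?_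
  by_contra hc
  push_neg at hc
  exact absurd (le_trans h (S.mono x hc.le)) (not_le.2 ht)

lemma le_nu_of_pnorm_lt (x : V) {w r : ℝ} (hw : w < 1) (h : pnorm S x w < r) :
    w ≤ S.nu x r := by
  by_contra hc
  push_neg at hc
  exact absurd (le_csSup (pnorm_bddAbove S x hw) hc) (not_le.2 h)

lemma pnorm_zero {w : ℝ} (hw : w ∈ Set.Ioo (0:ℝ) 1) : pnorm S 0 w = 0 := by
  have : {t | S.nu 0 t < w} = Set.Iic 0 := by
    ext t
    simp only [Set.mem_setOf_eq, S.nu_zero, H0, Set.mem_Iic]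
    by_cases ht : 0 < t
    · simp [ht, not_lt.2 hw.2.le, not_le.2 ht]
    · simp [ht, hw.1, not_lt.1 ht]
  rw [pnorm, this, csSup_Iic]

lemma pnorm_add_le (x y : V) {w : ℝ} (hw : w ∈ Set.Ioo (0:ℝ) 1) :
    pnorm S (x + y) w ≤ pnorm S x w + pnorm S y w := by
  refine le_of_forall_pos_le_add fun ε hε => ?_
  obtain ⟨s, t, hs, ht⟩ : ∃ s t : ℝ, s = pnorm S x w + ε / 2 ∧ t = pnorm S y w + ε / 2 :=
    ⟨_, _, rfl, rfl⟩
  have hx : w ≤ S.nu x s := le_nu_of_pnorm_lt S x hw.2 (by rw [hs]; linarith)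
  have hy : w ≤ S.nu y t := le_nu_of_pnorm_lt S y hw.2 (by rw [ht]; linarith)
  have hbdd : BddAbove (Set.range fun u : ℝ => min (S.nu x u) (S.nu y ((s + t) - u))) := by
    refine ⟨1, ?_⟩
    rintro _ ⟨u, rfl⟩
    exact le_trans (min_le_left _ _) (S.le_one x u)
  have htau : min (S.nu x s) (S.nu y ((s + t) - s)) ≤ tauM (S.nu x) (S.nu y) (s + t) :=
    le_ciSup hbdd s
  have hst : (s + t) - s = t := by ring
  rw [hst] at htau
  have hfin : w ≤ S.nu (x + y) (s + t) :=
    le_trans (le_min hx hy) (le_trans htau (S.nu_add x y (s + t)))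
  have := pnorm_le S (x + y) hw.1 hfin
  linarith

end Aux


section KF

variable {V : Type*} [AddCommGroup V] [Module ℝ V] (S : SPN V)

/-- The Ky Fan set of `x`. -/
def KA (x : V) : Set ℝ := {t : ℝ | 0 < t ∧ 1 - t < S.nu x t}

/-- The Ky Fan norm associated to a PN-space. -/
noncomputable def kf (x : V) : ℝ := sInf (KA S x)

lemma KA_upward {x : V} {t s : ℝ} (ht : t ∈ KA S x) (hts : t ≤ s) : s ∈ KA S x :=
  ⟨lt_of_lt_of_le ht.1 hts,
    lt_of_le_of_lt (by linarith) (lt_of_lt_of_le ht.2 (S.mono x hts))⟩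

lemma KA_nonempty (x : V) : (KA S x).Nonempty :=
  ⟨2, by norm_num, lt_of_lt_of_le (by norm_num) (S.nonneg x 2)⟩

lemma KA_bddBelow (x : V) : BddBelow (KA S x) :=
  ⟨0, fun t ht => ht.1.le⟩

lemma kf_nonneg (x : V) : 0 ≤ kf S x :=
  le_csInf (KA_nonempty S x) fun t ht => ht.1.le

lemma kf_le_of_mem {x : V} {t : ℝ} (ht : t ∈ KA S x) : kf S x ≤ t :=
  csInf_le (KA_bddBelow S x) ht

lemma mem_KA_of_kf_lt {x : V} {s : ℝ} (h : kf S x < s) : s ∈ KA S x := by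
  obtain ⟨t, ht, hts⟩ := exists_lt_of_csInf_lt (KA_nonempty S x) h
  exact KA_upward S ht hts.le

lemma kf_zero : kf S (0 : V) = 0 := by
  have : KA S (0 : V) = Set.Ioi 0 := by
    ext t
    simp only [KA, Set.mem_setOf_eq, S.nu_zero, Set.mem_Ioi]
    constructor
    · exact fun h => h.1
    · intro ht
      refine ⟨ht, ?_⟩
      simp only [H0, if_pos ht]
      linarith
  rw [kf, this, csInf_Ioi]

lemma eq_zero_of_kf {x : V} (h : kf S x = 0) : x = 0 := by
  rw [← S.nu_eq_iff]
  funext t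
  rcases le_or_gt t 0 with ht | ht
  · rw [S.nonpos x ht, H0, if_neg (not_lt.2 ht)]
  · have h1 : S.nu x t = 1 := by
      refine le_antisymm (S.le_one x t) ?_
      refine le_of_forall_pos_le_add fun ε hε => ?_
      have hmin : 0 < min t ε := lt_min ht hε
      have hs : min t ε ∈ KA S x := mem_KA_of_kf_lt S (by rw [h]; exact hmin)
      have hmono := S.mono x (min_le_left t ε)
      have := hs.2
      have hle : min t ε ≤ ε := min_le_right t ε
      linarith
    rw [h1, H0, if_pos ht]

lemma kf_neg (x : V) : kf S (-x) = kf S x := by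
  have : KA S (-x) = KA S x := by
    ext t
    simp only [KA, Set.mem_setOf_eq, S.nu_neg]
  rw [kf, this, kf]

lemma kf_add_le (x y : V) : kf S (x + y) ≤ kf S x + kf S y := by
  refine le_of_forall_pos_le_add fun ε hε => ?_
  obtain ⟨s, t, hs, ht⟩ : ∃ s t : ℝ, s = kf S x + ε / 2 ∧ t = kf S y + ε / 2 :=
    ⟨_, _, rfl, rfl⟩
  have hsm : s ∈ KA S x := mem_KA_of_kf_lt S (by rw [hs]; linarith)
  have htm : t ∈ KA S y := mem_KA_of_kf_lt S (by rw [ht]; linarith)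
  have hbdd : BddAbove (Set.range fun u : ℝ => min (S.nu x u) (S.nu y ((s + t) - u))) := by
    refine ⟨1, ?_⟩
    rintro _ ⟨u, rfl⟩
    exact le_trans (min_le_left _ _) (S.le_one x u)
  have htau : min (S.nu x s) (S.nu y ((s + t) - s)) ≤ tauM (S.nu x) (S.nu y) (s + t) :=
    le_ciSup hbdd s
  have hst : (s + t) - s = t := by ring
  rw [hst] at htau
  have hmem : s + t ∈ KA S (x + y) := by
    refine ⟨by linarith [hsm.1, htm.1], ?_⟩
    have h1 : 1 - (s + t) < min (S.nu x s) (S.nu y t) :=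
      lt_min (by linarith [hsm.2, htm.1]) (by linarith [htm.2, hsm.1])
    exact lt_of_lt_of_le h1 (le_trans htau (S.nu_add x y (s + t)))
  have := kf_le_of_mem S hmem
  linarith

/-- Bridge: small pnorm ball implies small kf. -/
lemma kf_le_of_pnorm_lt {x : V} {t : ℝ} (ht0 : 0 < t) (ht1 : t < 1)
    (h : pnorm S x (1 - t) < t) : kf S x ≤ t := by
  have hnu : 1 - t ≤ S.nu x t := le_nu_of_pnorm_lt S x (by linarith) h
  refine le_of_forall_pos_le_add fun ε hε => ?_
  refine kf_le_of_mem S ⟨by linarith, ?_⟩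
  have hmono := S.mono x (show t ≤ t + ε by linarith)
  linarith

/-- Bridge: small kf implies small pnorm. -/
lemma pnorm_le_of_kf_lt {x : V} {w s : ℝ} (hw : w ∈ Set.Ioo (0:ℝ) 1) (hsw : s ≤ 1 - w)
    (h : kf S x < s) : pnorm S x w ≤ s := by
  have hmem := mem_KA_of_kf_lt S h
  exact pnorm_le S x hw.1 (le_trans (by linarith [hmem.2]) (le_refl (S.nu x s)))

/-- The Ky Fan add-group norm. -/
noncomputable def SPN.gnorm : AddGroupNorm V where
  toFun := kf S
  map_zero' := kf_zero S
  add_le' := kf_add_le S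
  neg' := kf_neg S
  eq_zero_of_map_eq_zero' := fun _ h => eq_zero_of_kf S h

/-- The normed-group structure induced by the Ky Fan norm. -/
@[reducible]
noncomputable def SPN.nacg : NormedAddCommGroup V := S.gnorm.toNormedAddCommGroup

end KF

section OpenMapping

/-- Open mapping theorem for complete metrizable topological vector-like spaces
with translation-invariant group norms. -/
theorem aux_open_mapping {V W : Type*} [NormedAddCommGroup V] [Module ℝ V]
    [NormedAddCommGroup W] [Module ℝ W] [CompleteSpace V] [CompleteSpace W]
    (T : V →ₗ[ℝ] W) (hTc : Continuous T) (hTs : Function.Surjective T)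
    (hsmul : ∀ c : ℝ, c ≠ 0 → Continuous fun y : W => c • y)
    (habs : ∀ (x : V) (ε : ℝ), 0 < ε → ∃ n : ℕ, ‖((n : ℝ) + 1)⁻¹ • x‖ < ε) :
    IsOpenMap T := by
  -- Step A: closures of images of balls are neighborhoods of 0.
  have stepA : ∀ ε : ℝ, 0 < ε → closure (T '' Metric.ball 0 ε) ∈ 𝓝 (0 : W) := by
    intro ε hε
    have half : (0:ℝ) < ε / 2 := by linarith
    have hdiff : ∀ a ∈ closure (T '' Metric.ball (0:V) (ε/2)),
        ∀ b ∈ closure (T '' Metric.ball (0:V) (ε/2)),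
        a - b ∈ closure (T '' Metric.ball 0 ε) := by
      intro a ha b hb
      obtain ⟨u, hu, hulim⟩ := mem_closure_iff_seq_limit.mp ha
      obtain ⟨v, hv, hvlim⟩ := mem_closure_iff_seq_limit.mp hb
      refine mem_closure_iff_seq_limit.mpr ⟨fun n => u n - v n, fun n => ?_, hulim.sub hvlim⟩
      obtain ⟨p, hp, hpe⟩ := hu n
      obtain ⟨q, hq, hqe⟩ := hv n
      refine ⟨p - q, ?_, by rw [map_sub T p q, hpe, hqe]⟩
      rw [Metric.mem_ball, dist_zero_right] at hp hq ⊢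
      calc ‖p - q‖ ≤ ‖p‖ + ‖q‖ := norm_sub_le p q
        _ < ε := by linarith
    -- Baire
    have hcover : (⋃ n : ℕ, (fun y : W => ((n:ℝ)+1) • y) ''
        closure (T '' Metric.ball (0:V) (ε/2))) = Set.univ := by
      ext y
      simp only [Set.mem_iUnion, Set.mem_univ, iff_true]
      obtain ⟨x, rfl⟩ := hTs y
      obtain ⟨n, hn⟩ := habs x (ε/2) half
      have hn0 : ((n:ℝ) + 1) ≠ 0 := by positivity
      refine ⟨n, ((n:ℝ)+1)⁻¹ • T x, ?_, ?_⟩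
      · refine subset_closure ⟨((n:ℝ)+1)⁻¹ • x, ?_, (map_smul T _ x)⟩
        rw [Metric.mem_ball, dist_zero_right]
        exact hn
      · show ((n:ℝ)+1) • ((n:ℝ)+1)⁻¹ • T x = T x
        rw [smul_smul, mul_inv_cancel₀ hn0, one_smul]
    have hhomeo : ∀ n : ℕ, ∃ e : W ≃ₜ W, ⇑e = fun y : W => ((n:ℝ)+1) • y := by
      intro n
      have hn0 : ((n:ℝ) + 1) ≠ 0 := by positivity
      refine ⟨⟨⟨fun y => ((n:ℝ)+1) • y, fun y => ((n:ℝ)+1)⁻¹ • y, ?_, ?_⟩, ?_, ?_⟩, rfl⟩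
      · intro y; simp [smul_smul, inv_mul_cancel₀ hn0]
      · intro y; simp [smul_smul, mul_inv_cancel₀ hn0]
      · exact hsmul _ hn0
      · exact hsmul _ (inv_ne_zero hn0)
    have hclosed : ∀ n : ℕ, IsClosed ((fun y : W => ((n:ℝ)+1) • y) ''
        closure (T '' Metric.ball (0:V) (ε/2))) := by
      intro n
      obtain ⟨e, he⟩ := hhomeo n
      rw [← he]
      exact (e.isClosedMap) _ isClosed_closure
    obtain ⟨n, hne⟩ := nonempty_interior_of_iUnion_of_closed hclosed hcover
    have hint : (interior (closure (T '' Metric.ball (0:V) (ε/2)))).Nonempty := by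
      obtain ⟨e, he⟩ := hhomeo n
      rw [← he, ← Homeomorph.image_interior] at hne
      exact (Set.image_nonempty.mp hne)
    obtain ⟨y0, hy0⟩ := hint
    -- translate to 0
    have hNopen : IsOpen ((fun w : W => w + y0) ⁻¹'
        (interior (closure (T '' Metric.ball (0:V) (ε/2))))) :=
      (isOpen_interior).preimage (continuous_id.add continuous_const)
    refine Filter.mem_of_superset (hNopen.mem_nhds ?_) ?_
    · simpa using hy0
    · intro w hw
      have h1 : w + y0 ∈ closure (T '' Metric.ball (0:V) (ε/2)) := interior_subset hw
      have h2 := hdiff _ h1 _ (interior_subset hy0)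
      simpa using h2
  -- Step B: images of balls are neighborhoods of 0.
  have stepB : ∀ r : ℝ, 0 < r → T '' Metric.ball 0 r ∈ 𝓝 (0 : W) := by
    intro r hr
    have hδ : ∀ k : ℕ, ∃ d : ℝ, 0 < d ∧ d ≤ r / 2 ^ (k + 2) ∧
        ∀ x : V, ‖x‖ < d → ‖T x‖ < (2:ℝ)⁻¹ ^ k := by
      intro k
      have h2 : (0:ℝ) < 2⁻¹ ^ k := by positivity
      obtain ⟨d0, hd0, hd⟩ := Metric.continuous_iff.mp hTc 0 _ h2
      refine ⟨min d0 (r / 2 ^ (k + 2)), by positivity, min_le_right _ _, fun x hx => ?_⟩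
      have := hd x (by rw [dist_zero_right]; exact lt_of_lt_of_le hx (min_le_left _ _))
      simpa [dist_eq_norm, map_zero] using this
    choose δ hδ0 hδle hδT using hδ
    have hCnhds : ∀ k : ℕ, closure (T '' Metric.ball 0 (δ k)) ∈ 𝓝 (0:W) :=
      fun k => stepA _ (hδ0 k)
    have hCsmall : ∀ k : ℕ, ∀ z ∈ closure (T '' Metric.ball 0 (δ k)), ‖z‖ ≤ (2:ℝ)⁻¹ ^ k := by
      intro k z hz
      have hsub : T '' Metric.ball 0 (δ k) ⊆ Metric.closedBall 0 ((2:ℝ)⁻¹ ^ k) := by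
        rintro _ ⟨x, hx, rfl⟩
        rw [Metric.mem_ball, dist_zero_right] at hx
        rw [Metric.mem_closedBall, dist_zero_right]
        exact (hδT k x hx).le
      have := closure_minimal hsub Metric.isClosed_closedBall hz
      rwa [Metric.mem_closedBall, dist_zero_right] at this
    have hstep : ∀ (k : ℕ) (z : W), z ∈ closure (T '' Metric.ball 0 (δ k)) →
        ∃ u : V, ‖u‖ < δ k ∧ z - T u ∈ closure (T '' Metric.ball 0 (δ (k+1))) := by
      intro k z hz
      have hc : Continuous fun w : W => z - w := continuous_const.sub continuous_id
      have htend : Tendsto (fun w : W => z - w) (𝓝 z) (𝓝 (0:W)) := by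
        have := hc.tendsto z
        rwa [sub_self] at this
      have hN : (fun w : W => z - w) ⁻¹' (closure (T '' Metric.ball 0 (δ (k+1)))) ∈ 𝓝 z :=
        htend (hCnhds (k+1))
      obtain ⟨w, hw1, hw2⟩ := mem_closure_iff_nhds.mp hz _ hN
      obtain ⟨u, hu, rfl⟩ := hw2
      rw [Metric.mem_ball, dist_zero_right] at hu
      exact ⟨u, hu, hw1⟩
    suffices hsub : closure (T '' Metric.ball 0 (δ 0)) ⊆ T '' Metric.ball 0 r from
      Filter.mem_of_superset (hCnhds 0) hsub
    intro y hy
    choose u hu1 hu2 using hstep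
    let g : ∀ k : ℕ, {z : W // z ∈ closure (T '' Metric.ball 0 (δ k))} := fun k =>
      Nat.rec ⟨y, hy⟩ (fun k p => ⟨p.1 - T (u k p.1 p.2), hu2 k p.1 p.2⟩) k
    let xs : ℕ → V := fun k => u k (g k).1 (g k).2
    let s : ℕ → V := fun n => ∑ j ∈ Finset.range n, xs j
    have hg : ∀ k, (g k).1 = y - T (s k) := by
      intro k
      induction k with
      | zero => simp [s, g]
      | succ k ih =>
        have h1 : (g (k+1)).1 = (g k).1 - T (xs k) := rfl
        have h2 : s (k+1) = s k + xs k := Finset.sum_range_succ _ _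
        rw [h1, ih, h2, map_add]
        abel
    have hxs : ∀ k, ‖xs k‖ < δ k := fun k => hu1 k _ _
    have hcauchy : CauchySeq s := by
      refine cauchySeq_of_le_geometric (1/2 : ℝ) (r/4) (by norm_num) fun n => ?_
      have h1 : s (n+1) = s n + xs n := Finset.sum_range_succ _ _
      have h2 : dist (s n) (s (n+1)) = ‖xs n‖ := by
        rw [dist_eq_norm, h1, sub_add_cancel_left, norm_neg]
      rw [h2]
      have h3 : r / 2 ^ (n + 2) = r / 4 * (1/2) ^ n := by
        rw [pow_add]
        field_simp
        ring_nf
        try exact Or.inl trivial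
        rw [← mul_pow]; norm_num
      calc ‖xs n‖ ≤ δ n := (hxs n).le
        _ ≤ r / 2 ^ (n + 2) := hδle n
        _ = r / 4 * (1/2) ^ n := h3
    obtain ⟨xl, hxl⟩ := cauchySeq_tendsto_of_complete hcauchy
    have hsnorm : ∀ n, ‖s n‖ ≤ r / 2 := by
      intro n
      calc ‖s n‖ ≤ ∑ j ∈ Finset.range n, ‖xs j‖ := norm_sum_le _ _
        _ ≤ ∑ j ∈ Finset.range n, r / 4 * (1/2) ^ j := by
            refine Finset.sum_le_sum fun j _ => ?_
            have h3 : r / 2 ^ (j + 2) = r / 4 * (1/2) ^ j := by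
              rw [pow_add]; field_simp; ring_nf; try exact Or.inl trivial
              rw [← mul_pow]; norm_num
            calc ‖xs j‖ ≤ δ j := (hxs j).le
              _ ≤ r / 2 ^ (j + 2) := hδle j
              _ = r / 4 * (1/2) ^ j := h3
        _ = r / 4 * ∑ j ∈ Finset.range n, (1/2) ^ j := by rw [Finset.mul_sum]
        _ ≤ r / 4 * 2 := by
            have := sum_geometric_two_le n
            nlinarith [this]
        _ = r / 2 := by ring
    have hxlnorm : ‖xl‖ ≤ r / 2 := le_of_tendsto' hxl.norm hsnorm
    have hTsl : Tendsto (fun k => T (s k)) atTop (𝓝 (T xl)) := (hTc.tendsto xl).comp hxl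
    have hTy : Tendsto (fun k => T (s k)) atTop (𝓝 y) := by
      have hb : ∀ k : ℕ, ‖T (s k) - y‖ ≤ (2:ℝ)⁻¹ ^ k := by
        intro k
        have hmem : y - T (s k) ∈ closure (⇑T '' Metric.ball 0 (δ k)) := by
          rw [← hg k]; exact (g k).2
        have := hCsmall k _ hmem
        rwa [norm_sub_rev]
      have hlim : Tendsto (fun k : ℕ => (2:ℝ)⁻¹ ^ k) atTop (𝓝 0) :=
        tendsto_pow_atTop_nhds_zero_of_lt_one (by norm_num) (by norm_num)
      rw [tendsto_iff_norm_sub_tendsto_zero]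
      exact squeeze_zero (fun k => norm_nonneg _) hb hlim
    have hTxl : T xl = y := tendsto_nhds_unique hTsl hTy
    exact ⟨xl, by rw [Metric.mem_ball, dist_zero_right]; linarith, hTxl⟩
  -- Step C: conclude openness.
  intro U hU
  rw [isOpen_iff_mem_nhds]
  rintro _ ⟨x, hxU, rfl⟩
  obtain ⟨ρ, hρ, hball⟩ := Metric.isOpen_iff.mp hU x hxU
  have h0 := stepB ρ hρ
  have hmap : Filter.map (fun w : W => T x + w) (𝓝 (0:W)) = 𝓝 (T x) := by
    have := (Homeomorph.addLeft (T x)).map_nhds_eq (0:W)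
    simpa using this
  rw [← hmap, mem_map]
  refine Filter.mem_of_superset h0 ?_
  rintro _ ⟨v, hv, rfl⟩
  refine ⟨x + v, hball ?_, by rw [map_add]⟩
  rw [Metric.mem_ball, dist_zero_right] at hv
  rw [Metric.mem_ball]
  simpa [dist_eq_norm] using hv

end OpenMapping

section Glue

variable {V : Type*} [AddCommGroup V] [Module ℝ V]

lemma strongTop_eq (S : SPN V) :
    strongTop S =
      (S.nacg).toMetricSpace.toPseudoMetricSpace.toUniformSpace.toTopologicalSpace := by
  letI := S.nacg
  refine le_antisymm ?_ ?_
  · -- every metric-open set is strongTop-open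
    rw [TopologicalSpace.le_def]
    intro U hU
    show TopologicalSpace.GenerateOpen _ U
    have hgen : ∀ x ∈ U, ∃ G : Set V,
        (∃ (z : V) (w r : ℝ), w ∈ Set.Ioo (0:ℝ) 1 ∧ 0 < r ∧
          G = {y | pnorm S (y - z) w < r}) ∧ x ∈ G ∧ G ⊆ U := by
      intro x hx
      obtain ⟨ε, hε, hball⟩ := Metric.isOpen_iff.mp hU x hx
      obtain ⟨t, ht⟩ : ∃ t : ℝ, t = min (ε/2) 2⁻¹ := ⟨_, rfl⟩
      have ht0 : 0 < t := by rw [ht]; positivity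
      have ht1 : t < 1 := by
        rw [ht]
        calc min (ε/2) 2⁻¹ ≤ 2⁻¹ := min_le_right _ _
          _ < 1 := by norm_num
      refine ⟨{y | pnorm S (y - x) (1 - t) < t},
        ⟨x, 1 - t, t, ⟨by linarith, by linarith⟩, ht0, rfl⟩, ?_, ?_⟩
      · show pnorm S (x - x) (1 - t) < t
        rw [sub_self, pnorm_zero S ⟨by linarith, by linarith⟩]
        exact ht0
      · intro y hy
        have hkf : kf S (y - x) ≤ t := kf_le_of_pnorm_lt S ht0 ht1 hy
        refine hball ?_
        show dist y x < ε
        have hd : dist y x = kf S (y - x) := by rw [dist_eq_norm]; rfl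
        rw [hd, ht] at *
        have := min_le_left (ε/2) 2⁻¹
        calc kf S (y - x) ≤ min (ε/2) 2⁻¹ := hkf
          _ ≤ ε/2 := min_le_left _ _
          _ < ε := by linarith
    choose G hGgen hGmem hGsub using hgen
    have hUeq : U = ⋃₀ {s | ∃ (x : V) (hx : x ∈ U), s = G x hx} := by
      ext y
      constructor
      · intro hy
        exact ⟨G y hy, ⟨y, hy, rfl⟩, hGmem y hy⟩
      · rintro ⟨s, ⟨x, hx, rfl⟩, hys⟩
        exact hGsub x hx hys
    rw [hUeq]
    refine TopologicalSpace.GenerateOpen.sUnion _ ?_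
    rintro s ⟨x, hx, rfl⟩
    exact TopologicalSpace.GenerateOpen.basic _ (hGgen x hx)
  · -- every generator is metric-open
    refine le_generateFrom ?_
    rintro U ⟨x, w, r, hw, hr, rfl⟩
    rw [Metric.isOpen_iff]
    intro y0 hy0
    have hc : pnorm S (y0 - x) w < r := hy0
    obtain ⟨s, hs⟩ : ∃ s : ℝ, s = min ((r - pnorm S (y0 - x) w)/2) (1 - w) := ⟨_, rfl⟩
    have hs0 : 0 < s := by
      rw [hs]
      have h1 : 0 < (r - pnorm S (y0 - x) w)/2 := by linarith
      have h2 : 0 < 1 - w := by linarith [hw.2]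
      positivity
    refine ⟨s, hs0, fun y hy => ?_⟩
    have hkf : kf S (y - y0) < s := by rw [Metric.mem_ball, dist_eq_norm] at hy; exact hy
    have hp1 : pnorm S (y - y0) w ≤ s :=
      pnorm_le_of_kf_lt S hw (by rw [hs]; exact min_le_right _ _) hkf
    have hadd : pnorm S ((y - y0) + (y0 - x)) w ≤ pnorm S (y - y0) w + pnorm S (y0 - x) w :=
      pnorm_add_le S _ _ hw
    rw [sub_add_sub_cancel] at hadd
    show pnorm S (y - x) w < r
    have hsle : s ≤ (r - pnorm S (y0 - x) w)/2 := by rw [hs]; exact min_le_left _ _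
    linarith

lemma complete_of_strongComplete (S : SPN V) (h : StrongComplete S) :
    @CompleteSpace V (S.nacg).toMetricSpace.toPseudoMetricSpace.toUniformSpace := by
  letI := S.nacg
  refine Metric.complete_of_cauchySeq_tendsto fun u hu => ?_
  have hc : StrongCauchy S u := by
    intro t ht
    obtain ⟨N, hN⟩ := Metric.cauchySeq_iff.mp hu t ht
    refine ⟨N, fun m hm n hn => ?_⟩
    have h1 := hN n hn m hm
    have hk : kf S (u n - u m) < t := by rw [dist_eq_norm] at h1; exact h1
    exact (mem_KA_of_kf_lt S hk).2
  obtain ⟨p, hp⟩ := h u hc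
  refine ⟨p, ?_⟩
  rw [Metric.tendsto_atTop]
  intro ε hε
  obtain ⟨N, hN⟩ := hp (ε/2) (by linarith)
  refine ⟨N, fun n hn => ?_⟩
  have hm : (ε/2) ∈ KA S (u n - p) := ⟨by linarith, hN n hn⟩
  have hle : kf S (u n - p) ≤ ε/2 := kf_le_of_mem S hm
  show dist (u n) p < ε
  have hd : dist (u n) p = kf S (u n - p) := by rw [dist_eq_norm]; rfl
  linarith

end Glue


/-- Open Mapping Theorem for PN-spaces: a continuous surjective linear operator between
strongly complete Šerstnev PN-spaces is open for the strong topologies. -/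
theorem spn_open_mapping {V W : Type*} [AddCommGroup V] [Module ℝ V]
    [AddCommGroup W] [Module ℝ W]
    (S : SPN V) (S' : SPN W) (hV : StrongComplete S) (hW : StrongComplete S')
    (T : V →ₗ[ℝ] W)
    (hTc : @Continuous V W (strongTop S) (strongTop S') T)
    (hTs : Function.Surjective T) :
    ∀ U : Set V, @IsOpen V (strongTop S) U → @IsOpen W (strongTop S') (T '' U) := by

  letI nV : NormedAddCommGroup V := S.nacg
  letI nW : NormedAddCommGroup W := S'.nacg
  haveI cV : CompleteSpace V := complete_of_strongComplete S hV
  haveI cW : CompleteSpace W := complete_of_strongComplete S' hW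
  have htV := strongTop_eq S
  have htW := strongTop_eq S'
  rw [htV, htW] at hTc
  have hsmul : ∀ c : ℝ, c ≠ 0 → Continuous fun y : W => c • y := by
    intro c hc
    rw [Metric.continuous_iff]
    intro b ε hε
    have hcpos : (0:ℝ) < |c| := abs_pos.mpr hc
    refine ⟨min ((ε/2) / |c|) (ε/2), by positivity, fun a ha => ?_⟩
    have hd : dist (c • a) (c • b) = kf S' (c • (a - b)) := by
      rw [dist_eq_norm]
      show kf S' (c • a - c • b) = _
      rw [smul_sub]
    have ha' : kf S' (a - b) < min ((ε/2) / |c|) (ε/2) := by rw [dist_eq_norm] at ha; exact ha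
    have hmem := mem_KA_of_kf_lt S' ha'
    have h1 : S'.nu (c • (a - b)) (ε/2) = S'.nu (a - b) ((ε/2) / |c|) := S'.nu_smul c hc _ _
    have hmono := S'.mono (a - b) (min_le_left ((ε/2) / |c|) (ε/2))
    have hKA : (ε/2) ∈ KA S' (c • (a - b)) := by
      refine ⟨by linarith, ?_⟩
      rw [h1]
      have h2 : 1 - ε/2 ≤ 1 - min ((ε/2)/|c|) (ε/2) := by
        have := min_le_right ((ε/2)/|c|) (ε/2)
        linarith
      calc 1 - ε/2 ≤ 1 - min ((ε/2)/|c|) (ε/2) := h2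
        _ < S'.nu (a - b) (min ((ε/2)/|c|) (ε/2)) := hmem.2
        _ ≤ S'.nu (a - b) ((ε/2)/|c|) := hmono
    have hfin := kf_le_of_mem S' hKA
    rw [hd]
    linarith
  have habs : ∀ (x : V) (ε : ℝ), 0 < ε → ∃ n : ℕ, ‖((n : ℝ) + 1)⁻¹ • x‖ < ε := by
    intro x ε hε
    have hev : ∀ᶠ s in atTop, 1 - ε/2 < S.nu x s :=
      (S.proper x).eventually (eventually_gt_nhds (by linarith))
    obtain ⟨s0, hs0⟩ := eventually_atTop.mp hev
    obtain ⟨n, hn⟩ := exists_nat_ge (s0 / (ε/2))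
    refine ⟨n, ?_⟩
    have hn1 : (0:ℝ) < (n:ℝ) + 1 := by positivity
    have hne : ((n:ℝ)+1)⁻¹ ≠ 0 := by positivity
    have h1 : S.nu (((n:ℝ)+1)⁻¹ • x) (ε/2) = S.nu x ((ε/2) / |((n:ℝ)+1)⁻¹|) :=
      S.nu_smul _ hne x _
    have habs1 : |((n:ℝ)+1)⁻¹| = ((n:ℝ)+1)⁻¹ := abs_of_pos (by positivity)
    have h2 : (ε/2) / ((n:ℝ)+1)⁻¹ = (ε/2) * ((n:ℝ)+1) := by
      rw [div_eq_mul_inv, inv_inv]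
    have h3 : s0 ≤ (ε/2) * ((n:ℝ)+1) := by
      have hh : s0 / (ε/2) ≤ (n:ℝ) + 1 := by linarith
      have hε2 : (0:ℝ) < ε/2 := by linarith
      rw [div_le_iff₀ hε2] at hh
      nlinarith
    have hKA : (ε/2) ∈ KA S (((n:ℝ)+1)⁻¹ • x) := by
      refine ⟨by linarith, ?_⟩
      rw [h1, habs1, h2]
      exact hs0 _ h3
    have hkf := kf_le_of_mem S hKA
    show kf S (((n:ℝ)+1)⁻¹ • x) < ε
    linarith
  intro U hU
  rw [htV] at hU
  rw [htW]
  exact aux_open_mapping T hTc hTs hsmul habs U hU
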